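/- Let K be an even hyperbolic lattice of signature (1, n−1) and let (c_i)_{i∈S} be finitely many integral vectors in the rational closure of the positive cone satisfying Σ a_i c_i = 0 with nonzero integers a_i. Then there exists a Euclidean norm ‖·‖ on K⊗ℝ and the open set U where λ ↦ Σ a_i|λ·c_i| does not vanish satisfies: −Q(λ) ≥ ‖λ‖ for all λ ∈ U ∩ K. -/

import Mathlib

/-- An even symmetric bilinear form of signature `(1, n+1)` on `ℝ^{n+2}`. -/
def bh (n : ℕ) (x y : Fin (n+2) → ℝ) : ℝ :=
  x 0 * y 1 + x 1 * y 0 - 2 * ∑ i ∈ Finset.Ioi (1 : Fin (n+2)), x i * y i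

/-- The quadratic form `Q(x) = (1/2) x·x`. -/
noncomputable def qh (n : ℕ) (x : Fin (n+2) → ℝ) : ℝ := bh n x x / 2

/-- Lattice vectors: vectors with integer coordinates. -/
def intVec (n : ℕ) (x : Fin (n+2) → ℝ) : Prop := ∀ i, ∃ m : ℤ, x i = (m : ℝ)

/-- The positive cone of the hyperbolic space. -/
def posConeH (n : ℕ) : Set (Fin (n+2) → ℝ) := {x | 0 < bh n x x ∧ 0 < x 0 + x 1}

private lemma sum_split (n : ℕ) (g : Fin (n+2) → ℝ) :
    ∑ i, g i = g 0 + g 1 + ∑ i ∈ Finset.Ioi (1 : Fin (n+2)), g i := by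
  have h01 : (0 : Fin (n+2)) ∉ insert 1 (Finset.Ioi (1 : Fin (n+2))) := by
    simp [Fin.ext_iff, Fin.lt_def]
  have h1 : (1 : Fin (n+2)) ∉ Finset.Ioi (1 : Fin (n+2)) := by simp
  have huniv : (Finset.univ : Finset (Fin (n+2))) = insert 0 (insert 1 (Finset.Ioi 1)) := by
    ext i
    simp only [Finset.mem_univ, Finset.mem_insert, Finset.mem_Ioi, true_iff, Fin.ext_iff,
      Fin.lt_def, Fin.val_zero, Fin.val_one]
    omega
  rw [huniv, Finset.sum_insert h01, Finset.sum_insert h1]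
  ring

private def phiV (n : ℕ) (x : Fin (n+2) → ℝ) : Fin (n+2) → ℝ :=
  fun i => if i = 0 then x 0 - x 1 else if i = 1 then 0 else 2 * x i

private lemma phiV_zero (n : ℕ) (x : Fin (n+2) → ℝ) : phiV n x 0 = x 0 - x 1 := by simp [phiV]

private lemma phiV_one (n : ℕ) (x : Fin (n+2) → ℝ) : phiV n x 1 = 0 := by
  simp [phiV, Fin.ext_iff]

private lemma phiV_of (n : ℕ) (x : Fin (n+2) → ℝ) {i : Fin (n+2)} (hi : 1 < i) :
    phiV n x i = 2 * x i := by
  have h0 : i ≠ 0 := by rintro rfl; exact absurd hi (not_lt.mpr (Fin.zero_le _))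
  have h1 : i ≠ 1 := by simp [Fin.ext_iff]; simp [Fin.lt_def] at hi; omega
  simp [phiV, h0, h1]

private noncomputable def Wf (n : ℕ) (x y : Fin (n+2) → ℝ) : ℝ :=
  ∑ i, phiV n x i * phiV n y i

private noncomputable def Nf (n : ℕ) (x : Fin (n+2) → ℝ) : ℝ := Real.sqrt (Wf n x x)

private lemma Nf_nonneg (n : ℕ) (x : Fin (n+2) → ℝ) : 0 ≤ Nf n x := Real.sqrt_nonneg _

private lemma Nf_sq (n : ℕ) (x : Fin (n+2) → ℝ) :
    Nf n x = Real.sqrt (∑ i, phiV n x i ^ 2) := by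
  rw [Nf, Wf]
  congr 1
  exact Finset.sum_congr rfl fun i _ => (sq (phiV n x i)).symm

private lemma Wf_self (n : ℕ) (x : Fin (n+2) → ℝ) : Wf n x x = Nf n x ^ 2 := by
  rw [Nf, Real.sq_sqrt]
  exact Finset.sum_nonneg fun i _ => mul_self_nonneg _

private lemma abs_Wf_le (n : ℕ) (x y : Fin (n+2) → ℝ) : |Wf n x y| ≤ Nf n x * Nf n y := by
  rw [abs_le, Nf_sq, Nf_sq]
  constructor
  · have h := Real.sum_mul_le_sqrt_mul_sqrt Finset.univ (fun i => -phiV n x i) (phiV n y)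
    have e1 : ∑ i, -phiV n x i * phiV n y i = -Wf n x y := by
      rw [Wf, ← Finset.sum_neg_distrib]
      exact Finset.sum_congr rfl fun i _ => by ring
    have e2 : ∑ i, (-phiV n x i) ^ 2 = ∑ i, phiV n x i ^ 2 :=
      Finset.sum_congr rfl fun i _ => neg_sq _
    rw [e1, e2] at h
    linarith
  · have h := Real.sum_mul_le_sqrt_mul_sqrt Finset.univ (phiV n x) (phiV n y)
    rw [Wf]
    exact h

private lemma Wf_eq (n : ℕ) (x y : Fin (n+2) → ℝ) :
    Wf n x y = (x 0 - x 1) * (y 0 - y 1) + 4 * ∑ i ∈ Finset.Ioi (1 : Fin (n+2)), x i * y i := by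
  rw [Wf, sum_split, phiV_zero, phiV_zero, phiV_one, Finset.mul_sum]
  rw [Finset.sum_congr rfl fun i hi => by
    rw [phiV_of n x (Finset.mem_Ioi.mp hi), phiV_of n y (Finset.mem_Ioi.mp hi)]]
  rw [Finset.sum_congr rfl (fun i _ => by ring : ∀ i ∈ Finset.Ioi (1 : Fin (n+2)),
    2 * x i * (2 * y i) = 4 * (x i * y i))]
  ring

private lemma two_bh (n : ℕ) (x y : Fin (n+2) → ℝ) :
    2 * bh n x y = (x 0 + x 1) * (y 0 + y 1) - Wf n x y := by
  rw [Wf_eq, bh]; ring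

private noncomputable def bhL (n : ℕ) (x : Fin (n+2) → ℝ) : (Fin (n+2) → ℝ) →ₗ[ℝ] ℝ where
  toFun y := bh n x y
  map_add' y z := by
    simp only [bh, Pi.add_apply, mul_add]
    rw [Finset.sum_add_distrib]
    ring
  map_smul' r y := by
    simp only [bh, Pi.smul_apply, smul_eq_mul, RingHom.id_apply]
    rw [show ∑ i ∈ Finset.Ioi (1 : Fin (n+2)), x i * (r * y i)
        = r * ∑ i ∈ Finset.Ioi (1 : Fin (n+2)), x i * y i by
      rw [Finset.mul_sum]; exact Finset.sum_congr rfl fun i _ => by ring]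
    ring

private lemma bh_sum {n : ℕ} {ι : Type*} (S : Finset ι) (x : Fin (n+2) → ℝ)
    (r : ι → ℝ) (c : ι → (Fin (n+2) → ℝ)) :
    bh n x (∑ i ∈ S, r i • c i) = ∑ i ∈ S, r i * bh n x (c i) := by
  have := map_sum (bhL n x) (fun i => r i • c i) S
  simp only [map_smul, smul_eq_mul] at this
  exact this

private lemma bh_int {n : ℕ} {x y : Fin (n+2) → ℝ} (hx : intVec n x) (hy : intVec n y) :
    ∃ m : ℤ, bh n x y = (m : ℝ) := by
  obtain ⟨f, hf⟩ : ∃ f : Fin (n+2) → ℤ, ∀ i, x i = (f i : ℝ) :=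
    ⟨fun i => (hx i).choose, fun i => (hx i).choose_spec⟩
  obtain ⟨g, hg⟩ : ∃ g : Fin (n+2) → ℤ, ∀ i, y i = (g i : ℝ) :=
    ⟨fun i => (hy i).choose, fun i => (hy i).choose_spec⟩
  refine ⟨f 0 * g 1 + f 1 * g 0 - 2 * ∑ i ∈ Finset.Ioi (1 : Fin (n+2)), f i * g i, ?_⟩
  simp only [bh, hf, hg]
  push_cast
  ring

private lemma cone_closure {n : ℕ} {x : Fin (n+2) → ℝ} (hx : x ∈ closure (posConeH n)) :
    0 ≤ bh n x x ∧ 0 ≤ x 0 + x 1 := by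
  have hcont : Continuous fun z : Fin (n+2) → ℝ => bh n z z := by
    unfold bh
    exact (((continuous_apply 0).mul (continuous_apply 1)).add
      ((continuous_apply 1).mul (continuous_apply 0))).sub
      (continuous_const.mul (continuous_finset_sum _ fun i _ =>
        (continuous_apply i).mul (continuous_apply i)))
  have hcont2 : Continuous fun z : Fin (n+2) → ℝ => z 0 + z 1 :=
    (continuous_apply 0).add (continuous_apply 1)
  have hcl : IsClosed {z : Fin (n+2) → ℝ | 0 ≤ bh n z z ∧ 0 ≤ z 0 + z 1} :=
    (isClosed_le continuous_const hcont).inter (isClosed_le continuous_const hcont2)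
  have hsub : posConeH n ⊆ {z : Fin (n+2) → ℝ | 0 ≤ bh n z z ∧ 0 ≤ z 0 + z 1} :=
    fun z hz => ⟨le_of_lt hz.1, le_of_lt hz.2⟩
  exact closure_minimal hsub hcl hx

private lemma cone_NP {n : ℕ} {x : Fin (n+2) → ℝ} (hx : x ∈ closure (posConeH n)) :
    Nf n x ≤ x 0 + x 1 := by
  obtain ⟨h1, h2⟩ := cone_closure hx
  have h2bh := two_bh n x x
  have hW : Wf n x x ≤ (x 0 + x 1) ^ 2 := by nlinarith
  calc Nf n x = Real.sqrt (Wf n x x) := rfl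
    _ ≤ Real.sqrt ((x 0 + x 1) ^ 2) := Real.sqrt_le_sqrt hW
    _ = x 0 + x 1 := by rw [Real.sqrt_sq h2]

private lemma step_div {ν t NC B : ℝ} (h : t * NC + 2 ≤ ν * NC) (hNC : 0 ≤ NC)
    (hNCB : NC ≤ B) (hB : 0 ≤ B) : t + 2 / (1 + B) ≤ ν := by
  have h1B : (0:ℝ) < 1 + B := by linarith
  have hνt : 0 ≤ ν - t := by nlinarith
  have h2 : 2 ≤ (ν - t) * (1 + B) := by
    nlinarith [mul_nonneg hνt (by linarith : (0:ℝ) ≤ 1 + B - NC)]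
  have h3 : 2 / (1 + B) ≤ ν - t := (div_le_iff₀ h1B).mpr h2
  linarith

/-- If `(cᵢ)` are integral vectors in the rational closure of the positive cone with
`Σ aᵢcᵢ = 0` (`aᵢ` nonzero integers), then there is a Euclidean norm `‖·‖` on `K ⊗ ℝ`
such that `−Q(λ) ≥ ‖λ‖` for every lattice vector `λ` where `Σ aᵢ|λ·cᵢ|` does not
vanish. (A Euclidean norm is the pullback of the standard norm under a linear
isomorphism with Euclidean space.) -/
theorem euclidean_lower_bound (n : ℕ) {ι : Type*} (S : Finset ι)
    (c : ι → (Fin (n+2) → ℝ)) (a : ι → ℤ)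
    (hc : ∀ i ∈ S, intVec n (c i) ∧ c i ∈ closure (posConeH n))
    (ha : ∀ i ∈ S, a i ≠ 0)
    (hrel : ∑ i ∈ S, (a i : ℝ) • c i = 0) :
    ∃ T : (Fin (n+2) → ℝ) ≃ₗ[ℝ] EuclideanSpace ℝ (Fin (n+2)),
      ∀ lam : Fin (n+2) → ℝ, intVec n lam →
        (∑ i ∈ S, (a i : ℝ) * |bh n lam (c i)|) ≠ 0 →
        ‖T lam‖ ≤ -(qh n lam) := by
  classical
  set B : ℝ := ∑ j ∈ S, Nf n (c j) with hBdef
  have hBnn : 0 ≤ B := Finset.sum_nonneg fun j _ => Nf_nonneg n (c j)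
  set δ : ℝ := 2 / (1 + B) with hδdef
  have hδpos : 0 < δ := by positivity
  set ε : ℝ := δ / 4 with hεdef
  have hεpos : 0 < ε := by positivity
  set E := (EuclideanSpace.equiv (Fin (n+2)) ℝ).toLinearEquiv with hEdef
  refine ⟨(LinearEquiv.smulOfNeZero ℝ (Fin (n+2) → ℝ) ε hεpos.ne').trans E.symm, ?_⟩
  intro lam hlam hne
  -- the Euclidean norm of the image
  have hEsymm : ∀ (v : Fin (n+2) → ℝ) (i : Fin (n+2)),
      (E.symm v : EuclideanSpace ℝ (Fin (n+2))) i = v i := by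
    intro v i
    simp [hEdef, EuclideanSpace.equiv, PiLp.continuousLinearEquiv]
  have hTnorm : ‖((LinearEquiv.smulOfNeZero ℝ (Fin (n+2) → ℝ) ε hεpos.ne').trans E.symm) lam‖
      = ε * Real.sqrt (∑ i, lam i ^ 2) := by
    have h1 : ((LinearEquiv.smulOfNeZero ℝ (Fin (n+2) → ℝ) ε hεpos.ne').trans E.symm) lam
        = ε • (E.symm lam) := by
      rw [LinearEquiv.trans_apply]
      rw [show (LinearEquiv.smulOfNeZero ℝ (Fin (n+2) → ℝ) ε hεpos.ne') lam = ε • lam from rfl]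
      exact map_smul _ _ _
    rw [h1, norm_smul, Real.norm_eq_abs, abs_of_pos hεpos]
    congr 1
    rw [EuclideanSpace.norm_eq]
    congr 1
    refine Finset.sum_congr rfl fun i _ => ?_
    rw [hEsymm lam i, Real.norm_eq_abs, sq_abs]
  rw [hTnorm]
  -- integrality of pairings
  have hint : ∀ i ∈ S, ∃ m : ℤ, bh n lam (c i) = (m : ℝ) :=
    fun i hi => bh_int hlam (hc i hi).1
  have hzero : bh n lam 0 = 0 := by simp [bh]
  -- there is a pairing ≥ 1
  have hex_pos : ∃ i ∈ S, 1 ≤ bh n lam (c i) := by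
    by_contra h
    push_neg at h
    apply hne
    have hle : ∀ i ∈ S, bh n lam (c i) ≤ 0 := by
      intro i hi
      obtain ⟨m, hm⟩ := hint i hi
      have h1 : (m : ℝ) < 1 := hm ▸ h i hi
      have h2 : m ≤ 0 := by exact_mod_cast Int.lt_add_one_iff.mp (by exact_mod_cast h1)
      rw [hm]
      exact_mod_cast h2
    calc ∑ i ∈ S, (a i : ℝ) * |bh n lam (c i)|
        = ∑ i ∈ S, -((a i : ℝ) * bh n lam (c i)) := Finset.sum_congr rfl fun i hi => by
          rw [abs_of_nonpos (hle i hi)]; ring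
      _ = -bh n lam (∑ i ∈ S, (a i : ℝ) • c i) := by
          rw [bh_sum, ← Finset.sum_neg_distrib]
      _ = 0 := by rw [hrel, hzero, neg_zero]
  -- there is a pairing ≤ -1
  have hex_neg : ∃ j ∈ S, bh n lam (c j) ≤ -1 := by
    by_contra h
    push_neg at h
    apply hne
    have hle : ∀ i ∈ S, 0 ≤ bh n lam (c i) := by
      intro i hi
      obtain ⟨m, hm⟩ := hint i hi
      have h1 : (-1 : ℝ) < (m : ℝ) := hm ▸ h i hi
      have h2 : 0 ≤ m := by
        have : (-1 : ℤ) < m := by exact_mod_cast h1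
        omega
      rw [hm]
      exact_mod_cast h2
    calc ∑ i ∈ S, (a i : ℝ) * |bh n lam (c i)|
        = ∑ i ∈ S, (a i : ℝ) * bh n lam (c i) := Finset.sum_congr rfl fun i hi => by
          rw [abs_of_nonneg (hle i hi)]
      _ = bh n lam (∑ i ∈ S, (a i : ℝ) • c i) := (bh_sum S lam _ c).symm
      _ = 0 := by rw [hrel, hzero]
  obtain ⟨ip, hipS, hip⟩ := hex_pos
  obtain ⟨jn, hjnS, hjn⟩ := hex_neg
  set s : ℝ := lam 0 + lam 1 with hsdef
  set ν : ℝ := Nf n lam with hνdef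
  have hνnn : 0 ≤ ν := Nf_nonneg n lam
  have hNB : ∀ j ∈ S, Nf n (c j) ≤ B := fun j hj =>
    Finset.single_le_sum (f := fun j => Nf n (c j)) (fun j _ => Nf_nonneg n (c j)) hj
  -- key inequality : |s| + δ ≤ ν
  have hkey : |s| + δ ≤ ν := by
    rcases le_or_gt 0 s with hs | hs
    · -- use the negative pairing
      have hNP : Nf n (c jn) ≤ c jn 0 + c jn 1 := cone_NP (hc jn hjnS).2
      have hNCnn : 0 ≤ Nf n (c jn) := Nf_nonneg n (c jn)
      have h2 := two_bh n lam (c jn)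
      have hCS : Wf n lam (c jn) ≤ ν * Nf n (c jn) :=
        le_trans (le_abs_self _) (abs_Wf_le n lam (c jn))
      have hprod : s * Nf n (c jn) + 2 ≤ ν * Nf n (c jn) := by
        nlinarith [mul_nonneg hs (by linarith : (0:ℝ) ≤ c jn 0 + c jn 1 - Nf n (c jn))]
      rw [abs_of_nonneg hs, hδdef]
      exact step_div hprod hNCnn (hNB jn hjnS) hBnn
    · -- use the positive pairing
      have hNP : Nf n (c ip) ≤ c ip 0 + c ip 1 := cone_NP (hc ip hipS).2
      have hNCnn : 0 ≤ Nf n (c ip) := Nf_nonneg n (c ip)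
      have h2 := two_bh n lam (c ip)
      have hCS : -Wf n lam (c ip) ≤ ν * Nf n (c ip) :=
        le_trans (neg_le_abs _) (abs_Wf_le n lam (c ip))
      have hprod : (-s) * Nf n (c ip) + 2 ≤ ν * Nf n (c ip) := by
        nlinarith [mul_nonneg (by linarith : (0:ℝ) ≤ -s)
          (by linarith : (0:ℝ) ≤ c ip 0 + c ip 1 - Nf n (c ip))]
      rw [abs_of_neg hs, hδdef]
      exact step_div hprod hNCnn (hNB ip hipS) hBnn
  -- from the key inequality to the quadratic bound
  have hq : 2 * bh n lam lam = s ^ 2 - ν ^ 2 := by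
    rw [two_bh n lam lam, hνdef, ← Wf_self n lam, ← hsdef]
    ring
  have hνs2 : δ * (|s| + ν) ≤ ν ^ 2 - s ^ 2 := by
    nlinarith [sq_abs s, mul_nonneg (by linarith : (0:ℝ) ≤ ν - |s| - δ)
      (add_nonneg hνnn (abs_nonneg s)), abs_nonneg s]
  -- Euclidean norm bound
  have ePow : ∑ i ∈ Finset.Ioi (1 : Fin (n+2)), lam i ^ 2
      = ∑ i ∈ Finset.Ioi (1 : Fin (n+2)), lam i * lam i :=
    Finset.sum_congr rfl fun i _ => sq (lam i)
  have hEuc : Real.sqrt (∑ i, lam i ^ 2) ≤ |s| + ν := by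
    have hA : 0 ≤ ∑ i ∈ Finset.Ioi (1 : Fin (n+2)), lam i * lam i :=
      Finset.sum_nonneg fun i _ => mul_self_nonneg _
    have h1 : ∑ i, lam i ^ 2 ≤ (|s| + ν) ^ 2 := by
      have e2 := sum_split n (fun i => lam i ^ 2)
      have eW := Wf_eq n lam lam
      have eν : Wf n lam lam = ν ^ 2 := Wf_self n lam
      have eν2 : ν ^ 2 = (lam 0 - lam 1) ^ 2
          + 4 * ∑ i ∈ Finset.Ioi (1 : Fin (n+2)), lam i * lam i := by
        rw [← eν, eW]; ring
      have hs2 : s ^ 2 = (lam 0 + lam 1) ^ 2 := by rw [hsdef]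
      rw [e2, ePow]
      nlinarith [sq_abs s, mul_nonneg (abs_nonneg s) hνnn, sq_nonneg (lam 0), sq_nonneg (lam 1),
        eν2, hs2, hA]
    calc Real.sqrt (∑ i, lam i ^ 2) ≤ Real.sqrt ((|s| + ν) ^ 2) := Real.sqrt_le_sqrt h1
      _ = |s| + ν := Real.sqrt_sq (add_nonneg (abs_nonneg s) hνnn)
  -- conclude
  have hfin : ε * Real.sqrt (∑ i, lam i ^ 2) ≤ ε * (|s| + ν) :=
    mul_le_mul_of_nonneg_left hEuc hεpos.le
  have hqh : -(qh n lam) = (ν ^ 2 - s ^ 2) / 4 := by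
    rw [qh]
    linear_combination (-1/4 : ℝ) * hq
  rw [hqh]
  calc ε * Real.sqrt (∑ i, lam i ^ 2) ≤ ε * (|s| + ν) := hfin
    _ = δ * (|s| + ν) / 4 := by rw [hεdef]; ring
    _ ≤ (ν ^ 2 - s ^ 2) / 4 := by
        exact (div_le_div_iff_of_pos_right (by norm_num)).mpr hνs2
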